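/- Let Assumption 1 hold (for every i, the map ℓ_{y_i} : q ↦ ℓ(q, y_i) is differentiable on ℝ^{d_y}, convex, and nonnegative) and let λ > 0. Then at every local minimum (θ, a, b, W) of the modified objective L̃, one has a = 0; consequently g(x;a,b,W) = 0 for all x ∈ ℝ^{d_x}, the modified network output f(x;θ) + g(x;a,b,W) equals f(x;θ) for all x ∈ ℝ^{d_x}, and L̃(θ,a,b,W) = L(θ). -/

import Mathlib

open scoped RealInnerProductSpace

noncomputable section

/-- The added neuron: `g(x; a, b, W)ₖ = aₖ · exp(⟨wₖ, x⟩ + bₖ)`. -/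
def addedNeuron (dx dy : ℕ) (a b : EuclideanSpace ℝ (Fin dy))
    (W : Fin dy → EuclideanSpace ℝ (Fin dx)) (x : EuclideanSpace ℝ (Fin dx)) :
    EuclideanSpace ℝ (Fin dy) :=
  WithLp.toLp 2 (fun k => a k * Real.exp (⟪W k, x⟫ + b k))

/-- Auxiliary: derivative of `s ↦ ℓy (q + h s • E)` at `0` when `h 0 = 0`. -/
lemma key_deriv {dy : ℕ} (ℓy : EuclideanSpace ℝ (Fin dy) → ℝ)
    (hd : Differentiable ℝ ℓy) (q E : EuclideanSpace ℝ (Fin dy))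
    {h : ℝ → ℝ} {h' : ℝ} (hh : HasDerivAt h h' 0) (h0 : h 0 = 0) :
    HasDerivAt (fun s => ℓy (q + h s • E)) (h' * (fderiv ℝ ℓy q) E) 0 := by
  have hA : HasDerivAt (fun s => q + h s • E) (h' • E) 0 :=
    (hh.smul_const E).const_add q
  have hF : HasFDerivAt ℓy (fderiv ℝ ℓy (q + h 0 • E)) (q + h 0 • E) :=
    (hd (q + h 0 • E)).hasFDerivAt
  have := hF.comp_hasDerivAt 0 hA
  rw [h0, zero_smul, add_zero, ContinuousLinearMap.map_smul, smul_eq_mul] at this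
  exact this

theorem elimination_added_neuron_vanishes
    (m dx dy dθ : ℕ) (hm : 0 < m) (hdx : 0 < dx) (hdy : 0 < dy) (hdθ : 0 < dθ)
    (x : Fin m → EuclideanSpace ℝ (Fin dx))
    (y : Fin m → EuclideanSpace ℝ (Fin dy))
    (f : EuclideanSpace ℝ (Fin dx) → EuclideanSpace ℝ (Fin dθ) → EuclideanSpace ℝ (Fin dy))
    (ℓ : EuclideanSpace ℝ (Fin dy) → EuclideanSpace ℝ (Fin dy) → ℝ)
    -- Assumption 1: each ℓ_{y_i} is differentiable, convex and nonnegative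
    (hdiff : ∀ i : Fin m, Differentiable ℝ (fun q => ℓ q (y i)))
    (hconv : ∀ i : Fin m, ConvexOn ℝ Set.univ (fun q => ℓ q (y i)))
    (hnonneg : ∀ (i : Fin m) (q : EuclideanSpace ℝ (Fin dy)), 0 ≤ ℓ q (y i))
    (lam : ℝ) (hlam : 0 < lam)
    -- the original objective L
    (L : EuclideanSpace ℝ (Fin dθ) → ℝ)
    (hL : ∀ θ, L θ = (1 / (m : ℝ)) * ∑ i, ℓ (f (x i) θ) (y i))
    -- the modified objective L̃
    (Lt : EuclideanSpace ℝ (Fin dθ) → EuclideanSpace ℝ (Fin dy) → EuclideanSpace ℝ (Fin dy) →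
      (Fin dy → EuclideanSpace ℝ (Fin dx)) → ℝ)
    (hLt : ∀ θ a b W, Lt θ a b W =
      (1 / (m : ℝ)) * ∑ i, ℓ (f (x i) θ + addedNeuron dx dy a b W (x i)) (y i)
        + lam * ‖a‖ ^ 2)
    (θ : EuclideanSpace ℝ (Fin dθ)) (a b : EuclideanSpace ℝ (Fin dy))
    (W : Fin dy → EuclideanSpace ℝ (Fin dx))
    (hmin : IsLocalMin (fun p : EuclideanSpace ℝ (Fin dθ) × EuclideanSpace ℝ (Fin dy) ×
        EuclideanSpace ℝ (Fin dy) × (Fin dy → EuclideanSpace ℝ (Fin dx)) =>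
        Lt p.1 p.2.1 p.2.2.1 p.2.2.2) (θ, a, b, W)) :
    a = 0 ∧
    (∀ x' : EuclideanSpace ℝ (Fin dx), addedNeuron dx dy a b W x' = 0) ∧
    (∀ x' : EuclideanSpace ℝ (Fin dx),
      f x' θ + addedNeuron dx dy a b W x' = f x' θ) ∧
    Lt θ a b W = L θ := by
  have hm' : (0:ℝ) < m := by exact_mod_cast hm
  have key : ∀ k : Fin dy, a k = 0 := by
    intro k
    set E : EuclideanSpace ℝ (Fin dy) := EuclideanSpace.single k (1:ℝ) with hE
    set q : Fin m → EuclideanSpace ℝ (Fin dy) :=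
      fun i => f (x i) θ + addedNeuron dx dy a b W (x i) with hq
    set c : Fin m → ℝ := fun i => Real.exp (⟪W k, x i⟫ + b k) with hc
    set D : Fin m → ℝ := fun i => (fderiv ℝ (fun v => ℓ v (y i)) (q i)) E with hD
    -- argument identity for the a-perturbation
    have hargA : ∀ (i : Fin m) (s : ℝ),
        f (x i) θ + addedNeuron dx dy (a + s • E) b W (x i) = q i + (c i * s) • E := by
      intro i s
      ext j
      simp only [hq, hE, hc, addedNeuron, PiLp.add_apply, PiLp.smul_apply, PiLp.toLp_apply,
        EuclideanSpace.single_apply, smul_eq_mul]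
      by_cases hjk : j = k
      · subst hjk; simp; ring
      · simp [hjk]
    -- argument identity for the b-perturbation
    have hargB : ∀ (i : Fin m) (t : ℝ),
        f (x i) θ + addedNeuron dx dy a (b + t • E) W (x i)
          = q i + (a k * c i * (Real.exp t - 1)) • E := by
      intro i t
      ext j
      simp only [hq, hE, hc, addedNeuron, PiLp.add_apply, PiLp.smul_apply, PiLp.toLp_apply,
        EuclideanSpace.single_apply, smul_eq_mul]
      by_cases hjk : j = k
      · subst hjk
        simp only [if_true, eq_self_iff_true, if_pos, mul_one]
        rw [show (⟪W j, x i⟫ : ℝ) + (b j + t) = (⟪W j, x i⟫ + b j) + t by ring, Real.exp_add]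
        ring
      · simp [hjk]
    -- local minimality along the two lines
    have hψmin : IsLocalMin (fun s : ℝ => Lt θ (a + s • E) b W) 0 := by
      have hcont : ContinuousAt (fun s : ℝ =>
          ((θ, a + s • E, b, W) : EuclideanSpace ℝ (Fin dθ) × EuclideanSpace ℝ (Fin dy) ×
            EuclideanSpace ℝ (Fin dy) × (Fin dy → EuclideanSpace ℝ (Fin dx)))) 0 := by
        fun_prop
      have h0 : ((θ, a + (0:ℝ) • E, b, W) : EuclideanSpace ℝ (Fin dθ) ×
          EuclideanSpace ℝ (Fin dy) × EuclideanSpace ℝ (Fin dy) ×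
          (Fin dy → EuclideanSpace ℝ (Fin dx))) = (θ, a, b, W) := by simp
      have := IsLocalMin.comp_continuous (h0 ▸ hmin) hcont
      exact this
    have hφmin : IsLocalMin (fun t : ℝ => Lt θ a (b + t • E) W) 0 := by
      have hcont : ContinuousAt (fun t : ℝ =>
          ((θ, a, b + t • E, W) : EuclideanSpace ℝ (Fin dθ) × EuclideanSpace ℝ (Fin dy) ×
            EuclideanSpace ℝ (Fin dy) × (Fin dy → EuclideanSpace ℝ (Fin dx)))) 0 := by
        fun_prop
      have h0 : ((θ, a, b + (0:ℝ) • E, W) : EuclideanSpace ℝ (Fin dθ) ×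
          EuclideanSpace ℝ (Fin dy) × EuclideanSpace ℝ (Fin dy) ×
          (Fin dy → EuclideanSpace ℝ (Fin dx))) = (θ, a, b, W) := by simp
      have := IsLocalMin.comp_continuous (h0 ▸ hmin) hcont
      exact this
    -- derivative along a-direction
    have hψ : HasDerivAt (fun s : ℝ => Lt θ (a + s • E) b W)
        ((1/(m:ℝ)) * ∑ i, c i * D i + lam * (2 * a k)) 0 := by
      have h1 : ∀ i ∈ Finset.univ (α := Fin m), HasDerivAt (fun s : ℝ =>
          ℓ (f (x i) θ + addedNeuron dx dy (a + s • E) b W (x i)) (y i)) (c i * D i) 0 := by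
        intro i _
        have hh : HasDerivAt (fun s : ℝ => c i * s) (c i) 0 := by
          simpa using (hasDerivAt_id (0:ℝ)).const_mul (c i)
        have := key_deriv (fun v => ℓ v (y i)) (hdiff i) (q i) E hh (by simp)
        have heq : (fun s : ℝ =>
            ℓ (f (x i) θ + addedNeuron dx dy (a + s • E) b W (x i)) (y i))
            = fun s : ℝ => ℓ (q i + (c i * s) • E) (y i) := by
          funext s; rw [hargA i s]
        rw [heq]
        exact this
      have hsum := (HasDerivAt.fun_sum h1).const_mul (1/(m:ℝ))
      have h2 : HasDerivAt (fun s : ℝ => lam * ‖a + s • E‖ ^ 2) (lam * (2 * a k)) 0 := by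
        have hu : HasDerivAt (fun s : ℝ => a + s • E) E 0 := by
          simpa using ((hasDerivAt_id (0:ℝ)).smul_const E).const_add a
        have hi := hu.inner (𝕜 := ℝ) hu
        have h3 : HasDerivAt (fun s : ℝ => ⟪a + s • E, a + s • E⟫) (2 * a k) 0 := by
          refine hi.congr_deriv ?_
          symm
          simp [hE, EuclideanSpace.inner_single_left, EuclideanSpace.inner_single_right]
          ring
        have h4 := h3.const_mul lam
        have heq : (fun s : ℝ => lam * ‖a + s • E‖ ^ 2)
            = fun s : ℝ => lam * ⟪a + s • E, a + s • E⟫ := by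
          funext s; rw [real_inner_self_eq_norm_sq]
        rw [heq]; exact h4
      have := hsum.add h2
      have heq : (fun s : ℝ => Lt θ (a + s • E) b W)
          = fun s : ℝ => (1/(m:ℝ)) * ∑ i,
              ℓ (f (x i) θ + addedNeuron dx dy (a + s • E) b W (x i)) (y i)
            + lam * ‖a + s • E‖ ^ 2 := by
        funext s; rw [hLt]
      rw [heq]
      exact this
    -- derivative along b-direction
    have hφ : HasDerivAt (fun t : ℝ => Lt θ a (b + t • E) W)
        ((1/(m:ℝ)) * ∑ i, a k * c i * D i) 0 := by
      have h1 : ∀ i ∈ Finset.univ (α := Fin m), HasDerivAt (fun t : ℝ =>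
          ℓ (f (x i) θ + addedNeuron dx dy a (b + t • E) W (x i)) (y i)) (a k * c i * D i) 0 := by
        intro i _
        have hh : HasDerivAt (fun t : ℝ => a k * c i * (Real.exp t - 1)) (a k * c i) 0 := by
          simpa using ((Real.hasDerivAt_exp 0).sub_const 1).const_mul (a k * c i)
        have := key_deriv (fun v => ℓ v (y i)) (hdiff i) (q i) E hh (by simp)
        have heq : (fun t : ℝ =>
            ℓ (f (x i) θ + addedNeuron dx dy a (b + t • E) W (x i)) (y i))
            = fun t : ℝ => ℓ (q i + (a k * c i * (Real.exp t - 1)) • E) (y i) := by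
          funext t; rw [hargB i t]
        rw [heq]
        exact this
      have hsum := ((HasDerivAt.fun_sum h1).const_mul (1/(m:ℝ))).add_const (lam * ‖a‖ ^ 2)
      have heq : (fun t : ℝ => Lt θ a (b + t • E) W)
          = fun t : ℝ => (1/(m:ℝ)) * ∑ i,
              ℓ (f (x i) θ + addedNeuron dx dy a (b + t • E) W (x i)) (y i)
            + lam * ‖a‖ ^ 2 := by
        funext t; rw [hLt]
      rw [heq]
      exact hsum
    have e1 : (1/(m:ℝ)) * ∑ i, c i * D i + lam * (2 * a k) = 0 := by
      have := hψmin.deriv_eq_zero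
      rwa [hψ.deriv] at this
    have e2 : (1/(m:ℝ)) * ∑ i, a k * c i * D i = 0 := by
      have := hφmin.deriv_eq_zero
      rwa [hφ.deriv] at this
    have e2' : a k * ((1/(m:ℝ)) * ∑ i, c i * D i) = 0 := by
      have e2'' : (1/(m:ℝ)) * ∑ i, a k * c i * D i
          = a k * ((1/(m:ℝ)) * ∑ i, c i * D i) := by
        simp only [Finset.mul_sum]
        exact Finset.sum_congr rfl fun i _ => by ring
      rw [← e2'']
      exact e2
    have h3 : (1/(m:ℝ)) * ∑ i, c i * D i = -(lam * (2 * a k)) := by linarith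
    rw [h3] at e2'
    have h5 : a k ^ 2 = 0 := by
      have h2l : (2:ℝ) * lam ≠ 0 := by positivity
      have : (2 * lam) * a k ^ 2 = 0 := by linear_combination -e2'
      exact (mul_eq_zero.mp this).resolve_left h2l
    exact sq_eq_zero_iff.mp h5
  have ha0 : a = 0 := by
    ext k; exact key k
  have hg : ∀ x' : EuclideanSpace ℝ (Fin dx), addedNeuron dx dy a b W x' = 0 := by
    intro x'
    ext j
    simp [addedNeuron, ha0]
  refine ⟨ha0, hg, fun x' => by rw [hg x', add_zero], ?_⟩
  rw [hLt θ a b W, hL θ]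
  have hterm : ∀ i : Fin m,
      ℓ (f (x i) θ + addedNeuron dx dy a b W (x i)) (y i) = ℓ (f (x i) θ) (y i) :=
    fun i => by rw [hg, add_zero]
  simp only [hterm]
  rw [ha0, norm_zero]
  ring
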